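/- Let Q be a CC-loop and let α be a nuclear automorphism of Q, i.e., a bijection α : Q → Q with α(x·y) = α(x)·α(y) for all x, y, and such that x \ α(x) ∈ N(Q) for all x. Then α commutes with every left and right inner mapping: for all x, y, z ∈ Q, α((y·x)\(y·(x·z))) = (y·x)\(y·(x·α(z))) and α(((z·x)·y)/(x·y)) = ((α(z)·x)·y)/(x·y). -/
import Mathlib


/-- A loop: a type with multiplication, identity, and two-sided division. -/
class Loop (Q : Type*) extends Mul Q, One Q where
  ld : Q → Q → Q  -- left division: `ld x y = x \ y`
  rd : Q → Q → Q  -- right division: `rd x y = x / y`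
  one_mul : ∀ x : Q, 1 * x = x
  mul_one : ∀ x : Q, x * 1 = x
  mul_ld : ∀ x y : Q, x * ld x y = y
  ld_mul : ∀ x y : Q, ld x (x * y) = y
  rd_mul : ∀ x y : Q, rd x y * y = x
  mul_rd : ∀ x y : Q, rd (x * y) y = x

namespace Loop

variable {Q : Type*} [Loop Q]

/-- A conjugacy closed loop (CC-loop). -/
def IsCC (Q : Type*) [Loop Q] : Prop :=
  (∀ x y z : Q, x * (y * z) = rd (x * y) x * (x * z)) ∧
  (∀ x y z : Q, (z * y) * x = (z * x) * ld x (y * x))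

/-- The nucleus `N(Q)`. -/
def nucleus (Q : Type*) [Loop Q] : Set Q :=
  {a | (∀ x y : Q, a * (x * y) = (a * x) * y) ∧
       (∀ x y : Q, x * (a * y) = (x * a) * y) ∧
       (∀ x y : Q, x * (y * a) = (x * y) * a)}

/-- A subloop: contains 1 and is closed under `·`, `\`, `/`. -/
def IsSubloop (S : Set Q) : Prop :=
  (1 : Q) ∈ S ∧ (∀ a ∈ S, ∀ b ∈ S, a * b ∈ S) ∧
  (∀ a ∈ S, ∀ b ∈ S, ld a b ∈ S) ∧ (∀ a ∈ S, ∀ b ∈ S, rd a b ∈ S)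

/-- The subloop generated by a set `S`. -/
def closure (S : Set Q) : Set Q := ⋂₀ {T : Set Q | IsSubloop T ∧ S ⊆ T}

/-- An element is power-associative if the subloop it generates is associative. -/
def IsPA (a : Q) : Prop :=
  ∀ x ∈ closure {a}, ∀ y ∈ closure {a}, ∀ z ∈ closure {a}, x * (y * z) = (x * y) * z

/-- Powers: `pow a 0 = 1`, `pow a (n+1) = a * pow a n`. -/
def pow (a : Q) : ℕ → Q
  | 0 => 1
  | n + 1 => a * pow a n

/-- A WIP (weak inverse property) element. -/
def IsWIP (c : Q) : Prop := ∀ x : Q, c * ld (x * c) 1 = ld x 1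

end Loop

open Loop

section Aux

variable {Q : Type*} [Loop Q]

private lemma ld_eq_of (x y t : Q) (h : x * t = y) : ld x y = t := by
  rw [← h, Loop.ld_mul]

private lemma rd_eq_of (x y t : Q) (h : t * y = x) : rd x y = t := by
  rw [← h, Loop.mul_rd]

/-- From C1: `g*(u*t) = u*((u \ (g*u))*t)`. -/
private lemma lemA (hc1 : ∀ x y z : Q, x * (y * z) = rd (x * y) x * (x * z))
    (g u t : Q) : g * (u * t) = u * (ld u (g * u) * t) := by
  have h := hc1 u (ld u (g * u)) t
  rw [Loop.mul_ld] at h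
  rw [Loop.mul_rd] at h
  exact h.symm

/-- From C2: `(t*u)*g = (t*((u*g)/u))*u`. -/
private lemma lemA' (hc2 : ∀ x y z : Q, (z * y) * x = (z * x) * ld x (y * x))
    (t u g : Q) : (t * u) * g = (t * rd (u * g) u) * u := by
  have h := hc2 u (rd (u * g) u) t
  rw [Loop.rd_mul, Loop.ld_mul] at h
  exact h.symm

/-- Left inner mappings of an LCC loop are automorphisms. -/
private lemma L_aut (hc1 : ∀ x y z : Q, x * (y * z) = rd (x * y) x * (x * z))
    (x y z w : Q) :
    ld (y * x) (y * (x * (z * w))) =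
      ld (y * x) (y * (x * z)) * ld (y * x) (y * (x * w)) := by
  have h5 : rd (y * rd (x * z) x) y * (y * x) = y * (x * z) := by
    have h := hc1 y (rd (x * z) x) x
    rw [Loop.rd_mul] at h
    exact h.symm
  have key : y * (x * (z * w)) =
      (y * x) * (ld (y * x) (y * (x * z)) * ld (y * x) (y * (x * w))) := by
    calc y * (x * (z * w))
        = y * (rd (x * z) x * (x * w)) := by rw [← hc1 x z w]
      _ = rd (y * rd (x * z) x) y * (y * (x * w)) := hc1 y _ (x * w)
      _ = rd (y * rd (x * z) x) y * ((y * x) * ld (y * x) (y * (x * w))) := by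
          rw [Loop.mul_ld]
      _ = (y * x) * (ld (y * x) (rd (y * rd (x * z) x) y * (y * x)) *
            ld (y * x) (y * (x * w))) := lemA hc1 _ _ _
      _ = (y * x) * (ld (y * x) (y * (x * z)) * ld (y * x) (y * (x * w))) := by
          rw [h5]
  rw [key, Loop.ld_mul]

/-- In a CC loop, `(x0*a)/x0` is left-nuclear for nuclear `a`. -/
private lemma conj_left (hcc : IsCC Q) {a : Q} (hn : a ∈ nucleus Q)
    (x0 y z : Q) :
    rd (x0 * a) x0 * (y * z) = (rd (x0 * a) x0 * y) * z := by
  obtain ⟨hc1, hc2⟩ := hcc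
  obtain ⟨ha1, ha2, _⟩ := hn
  set c := rd (x0 * a) x0 with hc
  have hcx : c * x0 = x0 * a := Loop.rd_mul _ _
  have hstar : ∀ w : Q, x0 * (a * w) = c * (x0 * w) := fun w => hc1 x0 a w
  set t := ld x0 z with ht
  have hz : z = x0 * t := (Loop.mul_ld x0 z).symm
  set p := ld x0 (y * x0) with hp
  have h1 : y * (x0 * t) = x0 * (p * t) := lemA hc1 y x0 t
  have h2 : (c * y) * x0 = x0 * (a * p) := by
    have h := hc2 x0 y c
    rw [hcx] at h
    rw [h, ← hp, ha2]
  have h3 : ld x0 ((c * y) * x0) = a * p := by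
    rw [h2, Loop.ld_mul]
  calc c * (y * z) = c * (x0 * (p * t)) := by rw [hz, h1]
    _ = x0 * (a * (p * t)) := (hstar _).symm
    _ = x0 * ((a * p) * t) := by rw [ha1]
    _ = x0 * (ld x0 ((c * y) * x0) * t) := by rw [h3]
    _ = (c * y) * (x0 * t) := (lemA hc1 (c * y) x0 t).symm
    _ = (c * y) * z := by rw [← hz]

/-- In a CC loop, `y0 \ (a*y0)` is right-nuclear for nuclear `a`. -/
private lemma conj_r (hcc : IsCC Q) {a : Q} (hn : a ∈ nucleus Q)
    (y0 z t : Q) :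
    (z * t) * ld y0 (a * y0) = z * (t * ld y0 (a * y0)) := by
  obtain ⟨hc1, hc2⟩ := hcc
  obtain ⟨_, ha2, ha3⟩ := hn
  set m := ld y0 (a * y0) with hm
  have hym : y0 * m = a * y0 := Loop.mul_ld _ _
  have dd : ∀ v : Q, (v * y0) * m = (v * a) * y0 := by
    intro v
    have h := lemA' hc2 v y0 m
    rw [hym, Loop.mul_rd] at h
    exact h
  set v := rd z y0 with hv
  have hz : z = v * y0 := (Loop.rd_mul z y0).symm
  set q := rd (y0 * t) y0 with hq
  have h1 : (v * y0) * t = (v * q) * y0 := lemA' hc2 v y0 t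
  have h2 : y0 * (t * m) = (q * a) * y0 := by
    have h := hc1 y0 t m
    rw [hym] at h
    rw [h, ← hq, ha2]
  have h3 : rd (y0 * (t * m)) y0 = q * a := rd_eq_of _ _ _ h2.symm
  calc (z * t) * m = ((v * q) * y0) * m := by rw [hz, h1]
    _ = ((v * q) * a) * y0 := dd _
    _ = (v * (q * a)) * y0 := by rw [ha3]
    _ = (v * rd (y0 * (t * m)) y0) * y0 := by rw [h3]
    _ = (v * y0) * (t * m) := (lemA' hc2 v y0 (t * m)).symm
    _ = z * (t * m) := by rw [← hz]

/-- Stripping a right nuclear factor from the first argument of `L(·,y)`. -/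
private lemma stepII (hc1 : ∀ x y z : Q, x * (y * z) = rd (x * y) x * (x * z))
    {a : Q} (hn : a ∈ nucleus Q) (v y w : Q) :
    ld (y * (v * a)) (y * ((v * a) * w)) = ld (y * v) (y * (v * w)) := by
  obtain ⟨_, ha2, ha3⟩ := hn
  set Lw := ld (y * v) (y * (v * w)) with hLw
  have e1 : y * (v * a) = (y * v) * a := ha3 y v
  have fixa : ld (y * v) (y * (v * a)) = a := by rw [e1, Loop.ld_mul]
  have e4 : y * ((v * a) * w) = ((y * v) * a) * Lw := by
    calc y * ((v * a) * w) = y * (v * (a * w)) := by rw [← ha2 v w]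
      _ = (y * v) * ld (y * v) (y * (v * (a * w))) := (Loop.mul_ld _ _).symm
      _ = (y * v) * (ld (y * v) (y * (v * a)) * Lw) := by rw [L_aut hc1 v y a w]
      _ = (y * v) * (a * Lw) := by rw [fixa]
      _ = ((y * v) * a) * Lw := ha2 _ _
  rw [e1, e4, Loop.ld_mul]

/-- Stripping a left nuclear factor from the first argument of `L(·,y)`. -/
private lemma stepIII (hcc : IsCC Q) {b : Q} (hn : b ∈ nucleus Q)
    (x y w : Q) :
    ld (y * (b * x)) (y * ((b * x) * w)) = ld (y * x) (y * (x * w)) := by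
  have hcl : ∀ s t : Q, rd (y * b) y * (s * t) = (rd (y * b) y * s) * t :=
    fun s t => conj_left hcc hn y s t
  obtain ⟨hb1, hb2, _⟩ := hn
  set c := rd (y * b) y with hc
  have hcy : c * y = y * b := Loop.rd_mul _ _
  set Lw := ld (y * x) (y * (x * w)) with hLw
  have e1 : y * (b * x) = c * (y * x) := by
    rw [hb2 y x, ← hcy, ← hcl y x]
  have e2 : y * ((b * x) * w) = (c * (y * x)) * Lw := by
    calc y * ((b * x) * w) = y * (b * (x * w)) := by rw [← hb1 x w]
      _ = (y * b) * (x * w) := hb2 y (x * w)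
      _ = (c * y) * (x * w) := by rw [hcy]
      _ = c * (y * (x * w)) := (hcl y (x * w)).symm
      _ = c * ((y * x) * Lw) := by rw [Loop.mul_ld]
      _ = (c * (y * x)) * Lw := hcl _ _
  rw [e1, e2, Loop.ld_mul]

/-- Stripping a common right-nuclear-behaved factor inside `rd`. -/
private lemma strip_rd {b : Q} (hb : ∀ u v : Q, u * (v * b) = (u * v) * b)
    (P S : Q) : rd (P * b) (S * b) = rd P S := by
  apply rd_eq_of
  rw [hb, Loop.rd_mul]

private lemma alpha_ld (α : Q → Q) (hhom : ∀ x y : Q, α (x * y) = α x * α y)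
    (u v : Q) : α (ld u v) = ld (α u) (α v) := by
  have h : α u * α (ld u v) = α v := by rw [← hhom, Loop.mul_ld]
  exact (ld_eq_of _ _ _ h).symm

private lemma alpha_rd (α : Q → Q) (hhom : ∀ x y : Q, α (x * y) = α x * α y)
    (u v : Q) : α (rd u v) = rd (α u) (α v) := by
  have h : α (rd u v) * α v = α u := by rw [← hhom, Loop.rd_mul]
  exact (rd_eq_of _ _ _ h).symm

end Aux


/-- In a CC-loop, every nuclear automorphism commutes with all left and right
inner mappings. -/
theorem stmt_7 {Q : Type*} [Loop Q] (hcc : IsCC Q)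
    (α : Q → Q) (hbij : Function.Bijective α)
    (hhom : ∀ x y : Q, α (x * y) = α x * α y)
    (hnuc : ∀ x : Q, ld x (α x) ∈ nucleus Q) :
    ∀ x y z : Q,
      α (ld (y * x) (y * (x * z))) = ld (y * x) (y * (x * α z)) ∧
      α (rd ((z * x) * y) (x * y)) = rd ((α z * x) * y) (x * y) := by
  intro x y z
  obtain ⟨hc1, hc2⟩ := hcc
  have hna := hnuc x
  have hnb := hnuc y
  set a := ld x (α x) with ha
  set b := ld y (α y) with hb
  have hax : α x = x * a := (Loop.mul_ld x (α x)).symm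
  have hay : α y = y * b := (Loop.mul_ld y (α y)).symm
  obtain ⟨ha1, ha2, ha3⟩ := hna
  obtain ⟨hb1, hb2, hb3⟩ := hnb
  have hna' : a ∈ nucleus Q := ⟨ha1, ha2, ha3⟩
  have hnb' : b ∈ nucleus Q := ⟨hb1, hb2, hb3⟩
  constructor
  · -- left inner mapping
    have eI1 : (y * b) * (x * a) = y * ((b * x) * a) := by
      rw [← hb1 x a, ← hb2 y (x * a)]
    have eI2 : (y * b) * ((x * a) * (α z)) = y * (((b * x) * a) * α z) := by
      calc (y * b) * ((x * a) * α z)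
          = (y * b) * (x * (a * α z)) := by rw [ha2 x (α z)]
        _ = y * (b * (x * (a * α z))) := (hb2 y _).symm
        _ = y * ((b * x) * (a * α z)) := by rw [hb1 x (a * α z)]
        _ = y * (((b * x) * a) * α z) := by rw [ha2 (b * x) (α z)]
    calc α (ld (y * x) (y * (x * z)))
        = ld (α (y * x)) (α (y * (x * z))) := alpha_ld α hhom _ _
      _ = ld (α y * α x) (α y * (α x * α z)) := by rw [hhom, hhom, hhom]
      _ = ld ((y * b) * (x * a)) ((y * b) * ((x * a) * α z)) := by
          rw [hax, hay]
      _ = ld (y * ((b * x) * a)) (y * (((b * x) * a) * α z)) := by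
          rw [eI1, eI2]
      _ = ld (y * (b * x)) (y * ((b * x) * α z)) :=
          stepII hc1 hna' (b * x) y (α z)
      _ = ld (y * x) (y * (x * α z)) := stepIII ⟨hc1, hc2⟩ hnb' x y (α z)
  · -- right inner mapping
    set w := α z with hw
    set m := ld y (a * y) with hm
    have hmr : ∀ u v : Q, u * (v * m) = (u * v) * m :=
      fun u v => (conj_r ⟨hc1, hc2⟩ hna' y u v).symm
    have hay' : a * y = y * m := (Loop.mul_ld y (a * y)).symm
    have eR1 : (w * (x * a)) * (y * b) = ((w * x) * (a * y)) * b := by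
      calc (w * (x * a)) * (y * b)
          = ((w * x) * a) * (y * b) := by rw [ha3 w x]
        _ = (w * x) * (a * (y * b)) := (ha2 (w * x) (y * b)).symm
        _ = (w * x) * ((a * y) * b) := by rw [ha1 y b]
        _ = ((w * x) * (a * y)) * b := hb3 (w * x) (a * y)
    have eR2 : (x * a) * (y * b) = (x * (a * y)) * b := by
      calc (x * a) * (y * b)
          = x * (a * (y * b)) := (ha2 x (y * b)).symm
        _ = x * ((a * y) * b) := by rw [ha1 y b]
        _ = (x * (a * y)) * b := hb3 x (a * y)
    calc α (rd ((z * x) * y) (x * y))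
        = rd (α ((z * x) * y)) (α (x * y)) := alpha_rd α hhom _ _
      _ = rd ((w * α x) * α y) (α x * α y) := by rw [hhom, hhom, hhom, ← hw]
      _ = rd ((w * (x * a)) * (y * b)) ((x * a) * (y * b)) := by
          rw [hax, hay]
      _ = rd (((w * x) * (a * y)) * b) ((x * (a * y)) * b) := by
          rw [eR1, eR2]
      _ = rd ((w * x) * (a * y)) (x * (a * y)) := strip_rd hb3 _ _
      _ = rd (((w * x) * y) * m) ((x * y) * m) := by
          rw [hay', hmr (w * x) y, hmr x y]
      _ = rd ((w * x) * y) (x * y) := strip_rd hmr _ _
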